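/- arXiv:1506.05497 — 3 statements merged into one kernel-verified Lean document; each statement's English description precedes it below -/
import Mathlib

section
/- Let f : ℝᵐ → ℝⁿ, Γ ⊆ ℝᵐ, and g : ℝᵐ → ℝ. Define φ(y) = sup{ g(x) : x ∈ Γ, f(x) = y } (with φ(y) = -∞ if no such x exists), let φ̂ be the concave envelope of φ, and set ĝ = φ̂ ∘ f. Then ĝ is the (f,Γ)-concave envelope of g: ĝ is f-concave, ĝ(x) ≥ g(x) for all x ∈ Γ, and for any f-concave g̃ with g̃ ≥ g on Γ one has g̃ ≥ ĝ on Γ. -/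
/-- The construction of `(f,Γ)`-concave envelopes. Define
`φ y = sup { g x : x ∈ Γ, f x = y }` (valued in `EReal`, equal to `⊥ = -∞` when the set
is empty), let `φ̂` be the concave envelope of `φ` (a concave real-valued function that
majorizes `φ` and is least among concave real-valued majorants of `φ`), and set
`ĝ = φ̂ ∘ f`. Then `ĝ` is `f`-concave, `ĝ ≥ g` on `Γ`, and any `f`-concave function
majorizing `g` on `Γ` majorizes `ĝ` on `Γ`. -/
theorem stmt_4 (m n : ℕ) (f : (Fin m → ℝ) → (Fin n → ℝ))
    (Γ : Set (Fin m → ℝ)) (g : (Fin m → ℝ) → ℝ)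
    (φ : (Fin n → ℝ) → EReal)
    (hφ : ∀ y, φ y = sSup ((fun x => (g x : EReal)) '' {x | x ∈ Γ ∧ f x = y}))
    (φhat : (Fin n → ℝ) → ℝ)
    (hφhat_conc : ConcaveOn ℝ Set.univ φhat)
    (hφhat_maj : ∀ y, φ y ≤ (φhat y : EReal))
    (hφhat_min : ∀ ψ : (Fin n → ℝ) → ℝ, ConcaveOn ℝ Set.univ ψ →
      (∀ y, φ y ≤ (ψ y : EReal)) → ∀ y, φhat y ≤ ψ y) :
    (∃ φ' : (Fin n → ℝ) → ℝ, ConcaveOn ℝ Set.univ φ' ∧ (φhat ∘ f) = φ' ∘ f) ∧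
    (∀ x ∈ Γ, g x ≤ (φhat ∘ f) x) ∧
    (∀ gt : (Fin m → ℝ) → ℝ,
      (∃ ψ : (Fin n → ℝ) → ℝ, ConcaveOn ℝ Set.univ ψ ∧ gt = ψ ∘ f) →
      (∀ x ∈ Γ, g x ≤ gt x) → ∀ x ∈ Γ, (φhat ∘ f) x ≤ gt x) := by
  refine ⟨⟨φhat, hφhat_conc, rfl⟩, ?_, ?_⟩
  · intro x hx
    have h1 : (g x : EReal) ≤ φ (f x) := by
      rw [hφ]
      exact le_sSup ⟨x, ⟨hx, rfl⟩, rfl⟩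
    have h2 := h1.trans (hφhat_maj (f x))
    exact_mod_cast h2
  · rintro gt ⟨ψ, hψc, rfl⟩ hmaj x hx
    have key : ∀ y, φ y ≤ (ψ y : EReal) := by
      intro y
      rw [hφ]
      apply sSup_le
      rintro _ ⟨z, ⟨hz, hfz⟩, rfl⟩
      have := hmaj z hz
      rw [Function.comp_apply] at this
      simp only [← hfz]
      exact_mod_cast this
    exact hφhat_min ψ hψc key (f x)
end

section
/- Let ĝ = φ̂ ∘ f be the (f,Γ)-concave envelope of g, and let Γ' = { x ∈ Γ : g(x) = ĝ(x) } be the touching set. Suppose a ∈ Γ, y ∈ ∂φ̂(f(a)), but a ∉ Γ'. Then there exists a' ∈ Γ such that g(a) + y·(f(a') - f(a)) < g(a'). -/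
/-- Let `ĝ = φ̂ ∘ f` be the `(f,Γ)`-concave envelope of `g` and
`Γ' = {x ∈ Γ : g x = ĝ x}` the touching set. If `a ∈ Γ`, `y ∈ ∂φ̂(f a)` but `a ∉ Γ'`,
then there is `a' ∈ Γ` with `g a + y·(f a' - f a) < g a'`. -/
theorem stmt_6 (m n : ℕ) (f : (Fin m → ℝ) → (Fin n → ℝ))
    (Γ : Set (Fin m → ℝ)) (g : (Fin m → ℝ) → ℝ) (φhat : (Fin n → ℝ) → ℝ)
    (hconc : ConcaveOn ℝ Set.univ φhat)
    (hmaj : ∀ x ∈ Γ, g x ≤ φhat (f x))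
    (hmin : ∀ ψ : (Fin n → ℝ) → ℝ, ConcaveOn ℝ Set.univ ψ →
      (∀ x ∈ Γ, g x ≤ ψ (f x)) → ∀ x ∈ Γ, φhat (f x) ≤ ψ (f x))
    (a : Fin m → ℝ) (ha : a ∈ Γ) (y : Fin n → ℝ)
    (hy : ∀ x' : Fin n → ℝ, φhat x' ≤ φhat (f a) + ∑ i, y i * (x' i - f a i))
    (hnt : g a ≠ φhat (f a)) :
    ∃ a' ∈ Γ, g a + ∑ i, y i * (f a' i - f a i) < g a' := by
  by_contra hcon
  push_neg at hcon
  set ψ : (Fin n → ℝ) → ℝ := fun x' => g a + ∑ i, y i * (x' i - f a i) with hψ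
  have hψconc : ConcaveOn ℝ Set.univ ψ := by
    refine ⟨convex_univ, fun x _ z _ t s ht hs hts => ?_⟩
    have key : ∀ i, y i * ((t • x + s • z) i - f a i)
        = t * (y i * (x i - f a i)) + s * (y i * (z i - f a i)) := by
      intro i
      simp only [Pi.add_apply, Pi.smul_apply, smul_eq_mul]
      linear_combination (y i * f a i) * hts
    simp only [hψ, smul_eq_mul]
    rw [Finset.sum_congr rfl (fun i _ => key i), Finset.sum_add_distrib,
      ← Finset.mul_sum, ← Finset.mul_sum]
    have h : t * g a + s * g a = g a := by linear_combination (g a) * hts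
    linarith
  have h1 : φhat (f a) ≤ ψ (f a) := hmin ψ hψconc hcon a ha
  have h2 : ψ (f a) = g a := by simp [hψ]
  have h3 := hmaj a ha
  rw [h2] at h1
  exact hnt (le_antisymm h3 h1)
end

section
/- Let Λ' be a strictly positive-definite diagonal matrix on ℝ^{n-1}, g' ∈ ℝ^{n-1} with 1ᵀg' = 1, α > 0, β > 0. Define μ(z,x) = -(1/2)α²z² - (β/2)xᵀΛ'x on ℝ × ℝ^{n-1}, and let Λ = diag(α², βΛ'). Then the function h(y,z) = μ(z, g'(y-z)) is jointly concave on ℝ², strictly concave in z for each y, and its maximizer over z is T(y) = (βγ'/(α² + βγ'))y where γ' = g'ᵀΛ'g'. Moreover, the vector g = (T(1), g'(1 - T(1))) ∈ ℝⁿ satisfies 1ᵀg = 1 and sup_z h(y,z) = -(1/2)(gᵀΛg)y². -/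
open Matrix

/-- Inductive step for quadratic utilities. With `Λ'` strictly
positive-definite diagonal on `ℝ^k`, `1ᵀ g' = 1`, `α > 0`, `β > 0`,
`μ (z, x) = -(1/2) α² z² - (β/2) xᵀ Λ' x`, and `Λ = diag(α², βΛ')`: the function
`h (y, z) = μ (z, (y - z) • g')` is jointly concave, strictly concave in `z` for each
`y`, maximized over `z` at `T y = (βγ'/(α² + βγ')) y` with `γ' = g'ᵀ Λ' g'`; and the
vector `g = (T 1, (1 - T 1) • g')` satisfies `1ᵀ g = 1` and
`sup_z h (y, z) = -(1/2)(gᵀ Λ g) y²`. -/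
theorem stmt_12 (k : ℕ) (Λ' : Matrix (Fin k) (Fin k) ℝ) (hdiag : Λ'.IsDiag)
    (hpd : ∀ x : Fin k → ℝ, x ≠ 0 → 0 < x ⬝ᵥ Λ'.mulVec x)
    (g' : Fin k → ℝ) (hg' : ∑ i, g' i = 1)
    (α β : ℝ) (hα : 0 < α) (hβ : 0 < β)
    (μ : ℝ × (Fin k → ℝ) → ℝ)
    (hμ : ∀ (z : ℝ) (x : Fin k → ℝ),
      μ (z, x) = -(1/2) * α^2 * z^2 - (β/2) * (x ⬝ᵥ Λ'.mulVec x))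
    (Λ : Matrix (Fin (k+1)) (Fin (k+1)) ℝ)
    (hΛ00 : Λ 0 0 = α^2)
    (hΛ0j : ∀ j : Fin k, Λ 0 j.succ = 0)
    (hΛi0 : ∀ i : Fin k, Λ i.succ 0 = 0)
    (hΛij : ∀ i j : Fin k, Λ i.succ j.succ = β * Λ' i j)
    (T : ℝ → ℝ)
    (hT : ∀ y : ℝ, T y = β * (g' ⬝ᵥ Λ'.mulVec g') / (α^2 + β * (g' ⬝ᵥ Λ'.mulVec g')) * y)
    (g : Fin (k+1) → ℝ)
    (hg0 : g 0 = T 1) (hgs : ∀ i : Fin k, g i.succ = (1 - T 1) * g' i) :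
    ConcaveOn ℝ Set.univ (fun p : ℝ × ℝ => μ (p.2, (p.1 - p.2) • g')) ∧
    (∀ y : ℝ, StrictConcaveOn ℝ Set.univ (fun z : ℝ => μ (z, (y - z) • g'))) ∧
    (∀ y z : ℝ, μ (z, (y - z) • g') ≤ μ (T y, (y - T y) • g')) ∧
    (∑ i, g i = 1) ∧
    (∀ y : ℝ, μ (T y, (y - T y) • g') = -(1/2) * (g ⬝ᵥ Λ.mulVec g) * y^2) := by
  set γ : ℝ := g' ⬝ᵥ Λ'.mulVec g' with hγ
  have hgne : g' ≠ 0 := by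
    intro h
    rw [h] at hg'
    simp at hg'
  have hγpos : 0 < γ := hpd g' hgne
  have hαβγ : 0 < α ^ 2 + β * γ := by positivity
  -- key evaluation lemma
  have hval : ∀ y z : ℝ, μ (z, (y - z) • g')
      = -(1/2) * α^2 * z^2 - (β/2) * ((y - z)^2 * γ) := by
    intro y z
    rw [hμ]
    congr 1
    rw [smul_dotProduct, Matrix.mulVec_smul, dotProduct_smul]
    simp only [smul_eq_mul]
    ring
  have ht : T 1 = β * γ / (α^2 + β * γ) := by rw [hT]; ring
  set t : ℝ := T 1 with hteq
  have hTy : ∀ y, T y = t * y := by intro y; rw [hT, ht]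
  refine ⟨?_, ?_, ?_, ?_, ?_⟩
  · -- joint concavity
    refine ⟨convex_univ, ?_⟩
    rintro ⟨y1, z1⟩ - ⟨y2, z2⟩ - a b ha hb hab
    have hb' : b = 1 - a := by linarith
    subst hb'
    have ha1 : 0 ≤ 1 - a := hb
    simp only [Prod.smul_mk, Prod.mk_add_mk, smul_eq_mul, hval]
    nlinarith [mul_nonneg (sq_nonneg α) (mul_nonneg (mul_nonneg ha ha1) (sq_nonneg (z1 - z2))),
      mul_nonneg (mul_nonneg hβ.le hγpos.le)
        (mul_nonneg (mul_nonneg ha ha1) (sq_nonneg ((y1 - z1) - (y2 - z2))))]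
  · -- strict concavity in z
    intro y
    refine ⟨convex_univ, ?_⟩
    intro z1 _ z2 _ hne a b ha hb hab
    have hb' : b = 1 - a := by linarith
    subst hb'
    have ha1 : 0 < 1 - a := hb
    simp only [smul_eq_mul, hval]
    have h1 : 0 < α^2 * (a * (1 - a) * (z1 - z2)^2) := by
      apply mul_pos (by positivity)
      apply mul_pos (mul_pos ha ha1)
      have : z1 - z2 ≠ 0 := sub_ne_zero.mpr hne
      positivity
    nlinarith [h1, mul_nonneg (mul_nonneg hβ.le hγpos.le)
        (mul_nonneg (mul_nonneg ha.le ha1.le) (sq_nonneg ((y - z1) - (y - z2))))]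
  · -- maximizer
    intro y z
    rw [hval, hval, hTy]
    have hdiff : -(1/2)*α^2*(t*y)^2 - (β/2)*((y - t*y)^2*γ)
        - (-(1/2)*α^2*z^2 - (β/2)*((y - z)^2*γ))
        = (1/2)*(α^2 + β*γ)*(z - t*y)^2 := by
      rw [ht]
      field_simp
      ring
    nlinarith [hdiff, mul_nonneg hαβγ.le (sq_nonneg (z - t*y))]
  · -- sum = 1
    rw [Fin.sum_univ_succ]
    simp only [hg0, hgs, ← hteq]
    rw [← Finset.mul_sum, hg']
    ring
  · -- value at maximizer
    intro y
    have hgΛg : g ⬝ᵥ Λ.mulVec g = α^2 * t^2 + β * (1 - t)^2 * γ := by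
      simp only [dotProduct, Matrix.mulVec, Fin.sum_univ_succ, hΛ00, hΛ0j, hΛi0, hΛij,
        hg0, hgs, ← hteq, zero_mul, mul_zero, zero_add, add_zero, Finset.sum_const_zero]
      have : ∀ i, (1 - t) * g' i * (∑ j, β * Λ' i j * ((1 - t) * g' j))
          = β * (1 - t)^2 * (g' i * ∑ j, Λ' i j * g' j) := by
        intro i
        simp only [Finset.mul_sum]
        exact Finset.sum_congr rfl fun j _ => by ring
      rw [Finset.sum_congr rfl (fun i _ => this i), ← Finset.mul_sum]
      simp only [hγ, dotProduct, Matrix.mulVec]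
      ring
    rw [hval, hgΛg, hTy]
    ring
end
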